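/- A C¹ map f : ℝⁿ → ℝⁿ is a Laplacian map if and only if f is a gradient map f = ∇ḡ where ḡ(x₁,…,xₙ) = g(x₁ − xₙ, …, x_{n−1} − xₙ) + k·xₙ for some C² function g : ℝ^{n−1} → ℝ and constant k ∈ ℝ. -/

import Mathlib

open scoped BigOperators
open MeasureTheory intervalIntegral

/-- A C¹ map whose Jacobian at every point is a symmetric matrix each of whose rows sums
to zero (i.e. is a Laplacian matrix). -/
def IsLaplacianMap {n : ℕ} (f : (Fin n → ℝ) → Fin n → ℝ) : Prop :=
  ContDiff ℝ 1 f ∧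
    ∀ x : Fin n → ℝ,
      (∀ i j : Fin n,
        fderiv ℝ (fun y => f y i) x (Pi.single j 1) =
          fderiv ℝ (fun y => f y j) x (Pi.single i 1)) ∧
      (∀ i : Fin n, ∑ j : Fin n, fderiv ℝ (fun y => f y i) x (Pi.single j 1) = 0)

section aux
variable {N : ℕ}

lemma comp_fderiv_eq {f : (Fin N → ℝ) → Fin N → ℝ} (hf : Differentiable ℝ f)
    (x v : Fin N → ℝ) (i : Fin N) :
    fderiv ℝ (fun y => f y i) x v = fderiv ℝ f x v i := by
  have h := ((ContinuousLinearMap.proj (R := ℝ) (φ := fun _ : Fin N => ℝ) i).hasFDerivAt.comp x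
    (hf x).hasFDerivAt).fderiv
  have h2 : (fun y => f y i) = (ContinuousLinearMap.proj (R := ℝ) (φ := fun _ : Fin N => ℝ) i) ∘ f := rfl
  rw [h2, h]
  rfl


lemma vec_eq_sum (v : Fin N → ℝ) : v = ∑ j, v j • (Pi.single j (1:ℝ) : Fin N → ℝ) := by
  have h : ∀ j, v j • (Pi.single j (1:ℝ) : Fin N → ℝ) = Pi.single j (v j) := by
    intro j; rw [← Pi.single_smul, smul_eq_mul, mul_one]
  simp only [h]
  exact (Finset.univ_sum_single v).symm

lemma clm_apply_eq_sum {M : Type*} [NormedAddCommGroup M] [NormedSpace ℝ M]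
    (L : (Fin N → ℝ) →L[ℝ] M) (v : Fin N → ℝ) :
    L v = ∑ j, v j • L (Pi.single j 1) := by
  conv_lhs => rw [vec_eq_sum v]
  rw [map_sum]
  simp

lemma symQ {f : (Fin N → ℝ) → Fin N → ℝ}
    (hsym : ∀ (z : Fin N → ℝ) (i j : Fin N),
      fderiv ℝ f z (Pi.single j 1) i = fderiv ℝ f z (Pi.single i 1) j)
    (z v w : Fin N → ℝ) :
    ∑ i, fderiv ℝ f z w i * v i = ∑ i, fderiv ℝ f z v i * w i := by
  have expand : ∀ u : Fin N → ℝ, ∀ i, fderiv ℝ f z u i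
      = ∑ j, u j * fderiv ℝ f z (Pi.single j 1) i := by
    intro u i
    rw [clm_apply_eq_sum (fderiv ℝ f z) u]
    simp
  calc ∑ i, fderiv ℝ f z w i * v i
      = ∑ i, ∑ j, w j * fderiv ℝ f z (Pi.single j 1) i * v i := by
        refine Finset.sum_congr rfl fun i _ => ?_
        rw [expand w i, Finset.sum_mul]
    _ = ∑ j, ∑ i, w j * fderiv ℝ f z (Pi.single i 1) j * v i := by
        rw [Finset.sum_comm]
        refine Finset.sum_congr rfl fun i _ => Finset.sum_congr rfl fun j _ => ?_
        rw [hsym z i j]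
    _ = ∑ i, fderiv ℝ f z v i * w i := by
        refine Finset.sum_congr rfl fun j _ => ?_
        rw [expand v j, Finset.sum_mul]
        exact Finset.sum_congr rfl fun i _ => by ring

lemma dirDeriv (f : (Fin N → ℝ) → Fin N → ℝ) (hf : ContDiff ℝ 1 f)
    (hsym : ∀ (z : Fin N → ℝ) (i j : Fin N),
      fderiv ℝ f z (Pi.single j 1) i = fderiv ℝ f z (Pi.single i 1) j)
    (y h : Fin N → ℝ) (s₀ : ℝ) :
    HasDerivAt (fun s => ∫ t in (0:ℝ)..1, ∑ i, f (t • (y + s • h)) i * (y + s • h) i)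
      (∑ i, f (y + s₀ • h) i * h i) s₀ := by
  have hdiff : Differentiable ℝ f := hf.differentiable one_ne_zero
  have hcont : Continuous f := hf.continuous
  have hfd : Continuous (fderiv ℝ f) := hf.continuous_fderiv one_ne_zero
  set F' : ℝ → ℝ → ℝ := fun s t =>
    ∑ i, (fderiv ℝ f (t • (y + s • h)) (t • h) i * (y + s • h) i
      + f (t • (y + s • h)) i * h i) with hF'def
  -- continuity of F' jointly
  have hzc : Continuous fun p : ℝ × ℝ => p.2 • (y + p.1 • h) :=
    continuous_snd.smul (continuous_const.add (continuous_fst.smul continuous_const))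
  have hthc : Continuous fun p : ℝ × ℝ => p.2 • h := continuous_snd.smul continuous_const
  have happ : Continuous fun p : ℝ × ℝ =>
      fderiv ℝ f (p.2 • (y + p.1 • h)) (p.2 • h) :=
    isBoundedBilinearMap_apply.continuous.comp ((hfd.comp hzc).prodMk hthc)
  have hycomp : ∀ i : Fin N, Continuous fun p : ℝ × ℝ => (y + p.1 • h) i := by
    intro i
    have : (fun p : ℝ × ℝ => (y + p.1 • h) i) = fun p : ℝ × ℝ => y i + p.1 * h i := by
      funext p; simp
    rw [this]
    exact continuous_const.add (continuous_fst.mul continuous_const)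
  have hW : Continuous fun p : ℝ × ℝ => F' p.1 p.2 := by
    apply continuous_finset_sum
    intro i _
    exact (((continuous_apply i).comp happ).mul (hycomp i)).add
      (((continuous_apply i).comp (hcont.comp hzc)).mul continuous_const)
  have hFc : Continuous fun p : ℝ × ℝ => ∑ i, f (p.2 • (y + p.1 • h)) i * (y + p.1 • h) i := by
    apply continuous_finset_sum
    intro i _
    exact ((continuous_apply i).comp (hcont.comp hzc)).mul (hycomp i)
  -- pointwise derivative in s
  have hFs_deriv : ∀ (t s : ℝ),
      HasDerivAt (fun s => ∑ i, f (t • (y + s • h)) i * (y + s • h) i) (F' s t) s := by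
    intro t s
    have inner : HasDerivAt (fun s : ℝ => t • y + s • (t • h)) (t • h) s := by
      simpa using ((hasDerivAt_id s).smul_const (t • h)).const_add (t • y)
    have hzz : ∀ s : ℝ, t • (y + s • h) = t • y + s • (t • h) := by
      intro s; rw [smul_add, smul_comm]
    have hterm : ∀ i : Fin N, HasDerivAt
        (fun s : ℝ => f (t • y + s • (t • h)) i * (y i + s * h i))
        (fderiv ℝ f (t • y + s • (t • h)) (t • h) i * (y i + s * h i)
          + f (t • y + s • (t • h)) i * h i) s := by
      intro i
      have h1 := (hdiff (t • y + s • (t • h))).hasFDerivAt.comp_hasDerivAt s inner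
      have h2 := (ContinuousLinearMap.proj (R := ℝ) (φ := fun _ : Fin N => ℝ)
        i).hasFDerivAt.comp_hasDerivAt s h1
      have h3 : HasDerivAt (fun s : ℝ => y i + s * h i) (h i) s := by
        simpa using ((hasDerivAt_id s).mul_const (h i)).const_add (y i)
      exact h2.mul h3
    have hsum := HasDerivAt.fun_sum (fun i (_ : i ∈ Finset.univ) => hterm i)
    have hfun : (fun s : ℝ => ∑ i, f (t • (y + s • h)) i * (y + s • h) i)
        = fun s : ℝ => ∑ i, f (t • y + s • (t • h)) i * (y i + s * h i) := by
      funext s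
      exact Finset.sum_congr rfl fun i _ => by rw [hzz s]; simp
    rw [hfun]
    refine hsum.congr_deriv (Eq.symm ?_)
    refine Finset.sum_congr rfl fun i _ => ?_
    rw [hzz s]
    simp
  -- apply dominated differentiation
  obtain ⟨C, hC⟩ := (isCompact_Icc.prod isCompact_Icc).exists_bound_of_continuousOn
    (s := Set.Icc (s₀ - 1) (s₀ + 1) ×ˢ Set.Icc (0:ℝ) 1) hW.continuousOn
  have main := intervalIntegral.hasDerivAt_integral_of_dominated_loc_of_deriv_le
    (F := fun s t => ∑ i, f (t • (y + s • h)) i * (y + s • h) i)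
    (F' := F') (x₀ := s₀) (a := 0) (b := 1) (bound := fun _ => C) (μ := MeasureTheory.volume) (s := Metric.ball s₀ 1) (Metric.ball_mem_nhds s₀ one_pos)
    (Filter.Eventually.of_forall fun s =>
      ((hFc.comp (continuous_const.prodMk continuous_id)).aestronglyMeasurable))
    ((hFc.comp (continuous_const.prodMk continuous_id)).intervalIntegrable 0 1)
    ((hW.comp (continuous_const.prodMk continuous_id)).aestronglyMeasurable)
    (Filter.Eventually.of_forall fun t ht s hs => by
      have ht' : t ∈ Set.Icc (0:ℝ) 1 := Set.Ioc_subset_Icc_self (by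
        rwa [Set.uIoc_of_le (by norm_num : (0:ℝ) ≤ 1)] at ht)
      have hs' : s ∈ Set.Icc (s₀ - 1) (s₀ + 1) := by
        rw [Metric.mem_ball, Real.dist_eq] at hs
        constructor <;> [linarith [abs_lt.1 hs |>.1]; linarith [abs_lt.1 hs |>.2]]
      exact hC (s, t) (Set.mk_mem_prod hs' ht'))
    (intervalIntegrable_const)
    (Filter.Eventually.of_forall fun t ht s hs => hFs_deriv t s)
  -- compute the integral of F' s₀ via FTC
  set w := y + s₀ • h with hwdef
  have hc : ∀ t : ℝ, HasDerivAt (fun t : ℝ => t * ∑ i, f (t • w) i * h i) (F' s₀ t) t := by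
    intro t
    have hw : HasDerivAt (fun t : ℝ => ∑ i, f (t • w) i * h i)
        (∑ i, fderiv ℝ f (t • w) w i * h i) t := by
      apply HasDerivAt.fun_sum
      intro i _
      have inner : HasDerivAt (fun t : ℝ => t • w) w t := by
        simpa using (hasDerivAt_id t).smul_const w
      have h1 := (hdiff (t • w)).hasFDerivAt.comp_hasDerivAt t inner
      have h2 := (ContinuousLinearMap.proj (R := ℝ) (φ := fun _ : Fin N => ℝ)
        i).hasFDerivAt.comp_hasDerivAt t h1
      exact h2.mul_const (h i)
    have hprod := (hasDerivAt_id t).mul hw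
    refine hprod.congr_deriv (Eq.symm ?_)
    -- F' s₀ t = 1 * (∑ i, f (t•w) i * h i) + t * (∑ i, fderiv f (t•w) w i * h i)
    rw [hF'def]
    simp only [← hwdef, id_eq]
    have e1 : ∑ i, fderiv ℝ f (t • w) (t • h) i * w i
        = ∑ i, fderiv ℝ f (t • w) w i * (t • h) i := (symQ hsym (t • w) (t • h) w).symm
    rw [Finset.sum_add_distrib, e1]
    rw [one_mul, Finset.mul_sum]
    rw [add_comm]
    congr 1
    refine Finset.sum_congr rfl fun i _ => ?_
    simp [mul_comm, mul_assoc, mul_left_comm]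
  have hint : ∫ t in (0:ℝ)..1, F' s₀ t = ∑ i, f w i * h i := by
    rw [intervalIntegral.integral_eq_sub_of_hasDerivAt (fun t _ => hc t)
      ((hW.comp (continuous_const.prodMk continuous_id)).intervalIntegrable 0 1)]
    simp
  rw [hwdef] at hint
  rw [← hint]
  exact main.2
lemma sum_const_of (f : (Fin N → ℝ) → Fin N → ℝ) (hf : ContDiff ℝ 1 f)
    (hsym : ∀ (z : Fin N → ℝ) (i j : Fin N),
      fderiv ℝ f z (Pi.single j 1) i = fderiv ℝ f z (Pi.single i 1) j)
    (hrow : ∀ (z : Fin N → ℝ) (i : Fin N), ∑ j, fderiv ℝ f z (Pi.single j 1) i = 0)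
    (z : Fin N → ℝ) : ∑ i, f z i = ∑ i, f 0 i := by
  have hdiff : Differentiable ℝ f := hf.differentiable one_ne_zero
  have key : ∀ y, HasFDerivAt (fun y => ∑ i, f y i)
      (∑ i, (ContinuousLinearMap.proj (R := ℝ) (φ := fun _ : Fin N => ℝ) i).comp (fderiv ℝ f y)) y := by
    intro y
    apply HasFDerivAt.fun_sum
    intro i _
    exact (ContinuousLinearMap.proj i).hasFDerivAt.comp y (hdiff y).hasFDerivAt
  have hSdiff : Differentiable ℝ (fun y => ∑ i, f y i) := fun y => (key y).differentiableAt
  have hfder : ∀ y, fderiv ℝ (fun y => ∑ i, f y i) y = 0 := by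
    intro y
    rw [(key y).fderiv]
    refine ContinuousLinearMap.ext fun v => ?_
    rw [clm_apply_eq_sum]
    have hz : ∀ j : Fin N,
        (∑ i, (ContinuousLinearMap.proj (R := ℝ) (φ := fun _ : Fin N => ℝ) i).comp
          (fderiv ℝ f y)) (Pi.single j 1) = 0 := by
      intro j
      rw [ContinuousLinearMap.sum_apply]
      simp only [ContinuousLinearMap.comp_apply, ContinuousLinearMap.proj_apply]
      calc ∑ i, fderiv ℝ f y (Pi.single j 1) i
          = ∑ i, fderiv ℝ f y (Pi.single i 1) j := by
            exact Finset.sum_congr rfl fun i _ => hsym y i j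
        _ = 0 := hrow y j
    simp [hz]
  exact is_const_of_fderiv_eq_zero hSdiff hfder z 0
lemma gradG (f : (Fin N → ℝ) → Fin N → ℝ) (hf : ContDiff ℝ 1 f)
    (hsym : ∀ (z : Fin N → ℝ) (i j : Fin N),
      fderiv ℝ f z (Pi.single j 1) i = fderiv ℝ f z (Pi.single i 1) j)
    (x : Fin N → ℝ) :
    HasFDerivAt (fun x : Fin N → ℝ => ∫ t in (0:ℝ)..1, ∑ i, f (t • x) i * x i)
      (∑ i, f x i • ContinuousLinearMap.proj (R := ℝ) (φ := fun _ : Fin N => ℝ) i) x := by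
  have hcont : Continuous f := hf.continuous
  set L := (∑ i, f x i • ContinuousLinearMap.proj (R := ℝ) (φ := fun _ : Fin N => ℝ) i) with hLdef
  have hLapp : ∀ v : Fin N → ℝ, L v = ∑ i, f x i * v i := by
    intro v
    rw [hLdef, ContinuousLinearMap.sum_apply]
    refine Finset.sum_congr rfl fun i _ => ?_
    simp
  have hPc : ∀ h : Fin N → ℝ, Continuous fun s : ℝ => ∑ i, f (x + s • h) i * h i := by
    intro h
    apply continuous_finset_sum
    intro i _
    exact ((continuous_apply i).comp
      (hcont.comp (continuous_const.add (continuous_id.smul continuous_const)))).mul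
      continuous_const
  have hseg : ∀ h : Fin N → ℝ,
      (∫ t in (0:ℝ)..1, ∑ i, f (t • (x + h)) i * (x + h) i)
        - (∫ t in (0:ℝ)..1, ∑ i, f (t • x) i * x i)
        = ∫ s in (0:ℝ)..1, ∑ i, f (x + s • h) i * h i := by
    intro h
    have heq := intervalIntegral.integral_eq_sub_of_hasDerivAt
      (f := fun s => ∫ t in (0:ℝ)..1, ∑ i, f (t • (x + s • h)) i * (x + s • h) i)
      (f' := fun s => ∑ i, f (x + s • h) i * h i)
      (fun s _ => dirDeriv f hf hsym x h s) ((hPc h).intervalIntegrable 0 1)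
    simp only [one_smul, zero_smul, add_zero] at heq
    exact heq.symm
  rw [hasFDerivAt_iff_isLittleO_nhds_zero, Asymptotics.isLittleO_iff]
  intro c hc
  have hM : Continuous fun z : Fin N → ℝ => ∑ i, |f z i - f x i| := by
    apply continuous_finset_sum
    intro i _
    exact (((continuous_apply i).comp hcont).sub continuous_const).abs
  obtain ⟨δ, hδpos, hδ⟩ := Metric.continuousAt_iff.1 hM.continuousAt c hc
  filter_upwards [Metric.ball_mem_nhds (0 : Fin N → ℝ) hδpos] with h hh
  have hhn : ‖h‖ < δ := by simpa [dist_eq_norm] using hh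
  rw [hseg h]
  have hLint : L h = ∫ s in (0:ℝ)..1, ∑ i, f x i * h i := by
    rw [intervalIntegral.integral_const, hLapp]
    simp
  rw [hLint, ← intervalIntegral.integral_sub ((hPc h).intervalIntegrable 0 1)
    (intervalIntegrable_const)]
  have hbound : ∀ s ∈ Set.uIoc (0:ℝ) 1,
      ‖(∑ i, f (x + s • h) i * h i) - ∑ i, f x i * h i‖ ≤ c * ‖h‖ := by
    intro s hs
    have hs' : |s| ≤ 1 := by
      rw [Set.uIoc_of_le (by norm_num : (0:ℝ) ≤ 1)] at hs
      rw [abs_le]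
      exact ⟨by linarith [hs.1], hs.2⟩
    have hdist : dist (x + s • h) x < δ := by
      rw [dist_eq_norm]
      have : x + s • h - x = s • h := by abel
      rw [this, norm_smul, Real.norm_eq_abs]
      calc |s| * ‖h‖ ≤ 1 * ‖h‖ := by
            apply mul_le_mul_of_nonneg_right hs' (norm_nonneg _)
        _ = ‖h‖ := one_mul _
        _ < δ := hhn
    have hMlt : (∑ i, |f (x + s • h) i - f x i|) < c := by
      have := hδ hdist
      rw [Real.dist_eq] at this
      have h0 : (∑ i : Fin N, |f x i - f x i|) = 0 := by simp
      rw [h0, sub_zero] at this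
      exact lt_of_le_of_lt (le_abs_self _) this
    calc ‖(∑ i, f (x + s • h) i * h i) - ∑ i, f x i * h i‖
        = |(∑ i, (f (x + s • h) i - f x i) * h i)| := by
          rw [Real.norm_eq_abs, ← Finset.sum_sub_distrib]
          congr 1
          exact Finset.sum_congr rfl fun i _ => by ring
      _ ≤ ∑ i, |(f (x + s • h) i - f x i) * h i| := Finset.abs_sum_le_sum_abs _ _
      _ ≤ ∑ i, |f (x + s • h) i - f x i| * ‖h‖ := by
          refine Finset.sum_le_sum fun i _ => ?_
          rw [abs_mul]
          exact mul_le_mul_of_nonneg_left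
            (by simpa [Real.norm_eq_abs] using norm_le_pi_norm h i) (abs_nonneg _)
      _ = (∑ i, |f (x + s • h) i - f x i|) * ‖h‖ := by rw [Finset.sum_mul]
      _ ≤ c * ‖h‖ := mul_le_mul_of_nonneg_right hMlt.le (norm_nonneg _)
  have := intervalIntegral.norm_integral_le_of_norm_le_const hbound
  simpa using this
lemma sum_single_eq_one : (∑ j : Fin N, Pi.single j (1:ℝ)) = fun _ => 1 := by
  simpa using Finset.univ_sum_single (fun _ : Fin N => (1:ℝ))

lemma lap_backward {n : ℕ} (g : (Fin n → ℝ) → ℝ) (k : ℝ) (hg : ContDiff ℝ 2 g)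
    (f : (Fin (n+1) → ℝ) → Fin (n+1) → ℝ) (hf : ContDiff ℝ 1 f)
    (hfg : ∀ x i, f x i = fderiv ℝ
      (fun y => g (fun j : Fin n => y j.castSucc - y (Fin.last n)) + k * y (Fin.last n))
      x (Pi.single i 1)) :
    IsLaplacianMap f := by
  set G := fun y : Fin (n+1) → ℝ =>
    g (fun j : Fin n => y j.castSucc - y (Fin.last n)) + k * y (Fin.last n) with hGdef
  have hG : ContDiff ℝ 2 G := by
    apply ContDiff.add
    · exact hg.comp (contDiff_pi.2 fun j =>
        ((ContinuousLinearMap.proj (R := ℝ) (φ := fun _ : Fin (n+1) => ℝ)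
          j.castSucc).contDiff).sub
        ((ContinuousLinearMap.proj (R := ℝ) (φ := fun _ : Fin (n+1) => ℝ)
          (Fin.last n)).contDiff))
    · exact contDiff_const.mul
        ((ContinuousLinearMap.proj (R := ℝ) (φ := fun _ : Fin (n+1) => ℝ)
          (Fin.last n)).contDiff)
  have hGdiff : Differentiable ℝ G := hG.differentiable (by norm_num)
  have hG' : ContDiff ℝ 1 (fderiv ℝ G) := by
    have h2 : (2 : WithTop ℕ∞) = 1 + 1 := by norm_num
    exact ((contDiff_succ_iff_fderiv).1 (h2 ▸ hG)).2.2
  have hG'diff : Differentiable ℝ (fderiv ℝ G) := hG'.differentiable one_ne_zero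
  -- derivative of component functions of f
  have hcomp : ∀ (x : Fin (n+1) → ℝ) (i v : Fin (n+1) → ℝ) , True := fun _ _ _ => trivial
  have key : ∀ (i : Fin (n+1)) (x v : Fin (n+1) → ℝ),
      fderiv ℝ (fun y => f y i) x v = fderiv ℝ (fderiv ℝ G) x v (Pi.single i 1) := by
    intro i x v
    have hfi : (fun y => f y i) = fun y => fderiv ℝ G y (Pi.single i 1) :=
      funext fun y => hfg y i
    rw [hfi, fderiv_clm_apply (hG'diff x) (differentiableAt_const _)]
    simp
  constructor
  · exact hf
  intro x
  have hsymm : IsSymmSndFDerivAt ℝ G x := (hG.contDiffAt).isSymmSndFDerivAt (by simp [minSmoothness_of_isRCLikeNormedField])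
  constructor
  · intro i j
    rw [key, key, hsymm]
  · intro i
    -- row sums
    have hGshift : ∀ (c : ℝ) (y : Fin (n+1) → ℝ),
        G (y + c • (fun _ : Fin (n+1) => (1:ℝ))) = G y + k * c := by
      intro c y
      simp only [hGdef, Pi.add_apply, Pi.smul_apply, smul_eq_mul, mul_one]
      have hfix : (fun j : Fin n => y j.castSucc + c - (y (Fin.last n) + c))
          = fun j => y j.castSucc - y (Fin.last n) := by funext j; ring
      rw [hfix]; ring
    have hfinv : ∀ (c : ℝ) (y : Fin (n+1) → ℝ), f (y + c • (fun _ : Fin (n+1) => (1:ℝ))) i = f y i := by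
      intro c y
      have e1 : HasFDerivAt (fun z : Fin (n+1) → ℝ => G (z + c • (fun _ : Fin (n+1) => (1:ℝ))))
          (fderiv ℝ G (y + c • (fun _ : Fin (n+1) => (1:ℝ)))) y := by
        have := (hGdiff (y + c • (fun _ : Fin (n+1) => (1:ℝ)))).hasFDerivAt.comp y
          ((hasFDerivAt_id y).add_const (c • (fun _ : Fin (n+1) => (1:ℝ))))
        simpa [Function.comp_def] using this
      have e2 : HasFDerivAt (fun z : Fin (n+1) → ℝ => G (z + c • (fun _ : Fin (n+1) => (1:ℝ))))
          (fderiv ℝ G y) y := by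
        have : (fun z : Fin (n+1) → ℝ => G (z + c • (fun _ : Fin (n+1) => (1:ℝ))))
            = fun z => G z + k * c := funext fun z => hGshift c z
        rw [this]
        exact (hGdiff y).hasFDerivAt.add_const (k * c)
      rw [hfg, hfg, e1.unique e2]
    -- sum over basis = derivative along all-ones, which is 0
    have hdiffi : Differentiable ℝ (fun y => f y i) := by
      intro y
      exact (ContinuousLinearMap.proj (R := ℝ) (φ := fun _ : Fin (n+1) => ℝ)
        i).differentiableAt.comp y (hf.differentiable one_ne_zero y)
    calc ∑ j, fderiv ℝ (fun y => f y i) x (Pi.single j 1)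
        = fderiv ℝ (fun y => f y i) x (∑ j, Pi.single j 1) := by rw [map_sum]
      _ = fderiv ℝ (fun y => f y i) x (fun _ => 1) := by rw [sum_single_eq_one]
      _ = 0 := by
          have hone : HasDerivAt (fun c : ℝ => x + c • (fun _ : Fin (n+1) => (1:ℝ)))
              (fun _ => (1:ℝ)) 0 := by
            simpa using ((hasDerivAt_id (0:ℝ)).smul_const
              (fun _ : Fin (n+1) => (1:ℝ))).const_add x
          have h1 : HasDerivAt (fun c : ℝ => f (x + c • (fun _ : Fin (n+1) => (1:ℝ))) i)
              (fderiv ℝ (fun y => f y i) x (fun _ => 1)) 0 := by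
            have := ((hdiffi (x + (0:ℝ) • fun _ : Fin (n+1) => (1:ℝ))).hasFDerivAt.comp_hasDerivAt 0 hone)
            simpa [Function.comp_def] using this
          have h2 : (fun c : ℝ => f (x + c • (fun _ : Fin (n+1) => (1:ℝ))) i)
              = fun _ => f x i := funext fun c => hfinv c x
          have h3 : HasDerivAt (fun c : ℝ => f (x + c • (fun _ : Fin (n+1) => (1:ℝ))) i)
              0 0 := h2 ▸ hasDerivAt_const 0 (f x i)
          exact h1.unique h3
lemma lap_forward {n : ℕ} (f : (Fin (n+1) → ℝ) → Fin (n+1) → ℝ) (hf : ContDiff ℝ 1 f)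
    (hL : IsLaplacianMap f) :
    ∃ (g : (Fin n → ℝ) → ℝ) (k : ℝ), ContDiff ℝ 2 g ∧
      ∀ (x : Fin (n + 1) → ℝ) (i : Fin (n + 1)),
        f x i = fderiv ℝ
          (fun y : Fin (n + 1) → ℝ =>
            g (fun j : Fin n => y j.castSucc - y (Fin.last n)) + k * y (Fin.last n))
          x (Pi.single i 1) := by
  have hdiff : Differentiable ℝ f := hf.differentiable one_ne_zero
  have hsym : ∀ (z : Fin (n+1) → ℝ) (i j : Fin (n+1)),
      fderiv ℝ f z (Pi.single j 1) i = fderiv ℝ f z (Pi.single i 1) j := by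
    intro z i j
    have := (hL.2 z).1 i j
    rwa [comp_fderiv_eq hdiff, comp_fderiv_eq hdiff] at this
  have hrow : ∀ (z : Fin (n+1) → ℝ) (i : Fin (n+1)),
      ∑ j, fderiv ℝ f z (Pi.single j 1) i = 0 := by
    intro z i
    have := (hL.2 z).2 i
    calc ∑ j, fderiv ℝ f z (Pi.single j 1) i
        = ∑ j, fderiv ℝ (fun y => f y i) z (Pi.single j 1) := by
          exact Finset.sum_congr rfl fun j _ => (comp_fderiv_eq hdiff z _ i).symm
      _ = 0 := this
  set G : (Fin (n+1) → ℝ) → ℝ := fun x => ∫ t in (0:ℝ)..1, ∑ i, f (t • x) i * x i with hGdef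
  have hGf : ∀ x, HasFDerivAt G
      (∑ i, f x i • ContinuousLinearMap.proj (R := ℝ) (φ := fun _ : Fin (n+1) => ℝ) i) x :=
    fun x => gradG f hf hsym x
  set k : ℝ := ∑ i, f 0 i with hkdef
  have hk : ∀ z, ∑ i, f z i = k := fun z => sum_const_of f hf hsym hrow z
  have hLapp : ∀ (z v : Fin (n+1) → ℝ),
      (∑ i, f z i • ContinuousLinearMap.proj (R := ℝ) (φ := fun _ : Fin (n+1) => ℝ) i) v
        = ∑ i, f z i * v i := by
    intro z v
    rw [ContinuousLinearMap.sum_apply]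
    exact Finset.sum_congr rfl fun i _ => by simp
  -- G is C²
  have hG2 : ContDiff ℝ 2 G := by
    rw [show (2 : WithTop ℕ∞) = 1 + 1 by norm_num, contDiff_succ_iff_fderiv]
    refine ⟨fun x => (hGf x).differentiableAt, by simp, ?_⟩
    have hfd : fderiv ℝ G = fun x =>
        ∑ i, f x i • ContinuousLinearMap.proj (R := ℝ) (φ := fun _ : Fin (n+1) => ℝ) i :=
      funext fun x => (hGf x).fderiv
    rw [hfd]
    apply ContDiff.sum
    intro i _
    exact (((ContinuousLinearMap.proj (R := ℝ) (φ := fun _ : Fin (n+1) => ℝ) i).contDiff.comp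
      hf)).smul contDiff_const
  -- shift invariance
  have hGshift : ∀ (x : Fin (n+1) → ℝ) (c : ℝ),
      G (x + c • (fun _ : Fin (n+1) => (1:ℝ))) = G x + k * c := by
    intro x c
    have hu : ∀ c : ℝ, HasDerivAt
        (fun c : ℝ => G (x + c • (fun _ : Fin (n+1) => (1:ℝ))) - k * c) 0 c := by
      intro c
      have hone : HasDerivAt (fun c : ℝ => x + c • (fun _ : Fin (n+1) => (1:ℝ)))
          (fun _ : Fin (n+1) => (1:ℝ)) c := by
        simpa using ((hasDerivAt_id c).smul_const (fun _ : Fin (n+1) => (1:ℝ))).const_add x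
      have h1 := (hGf (x + c • (fun _ : Fin (n+1) => (1:ℝ)))).comp_hasDerivAt c hone
      have h2 : HasDerivAt (fun c : ℝ => k * c) k c := by
        simpa using (hasDerivAt_id c).const_mul k
      have h3 := h1.sub h2
      have hval : (∑ i, f (x + c • (fun _ : Fin (n+1) => (1:ℝ))) i •
          ContinuousLinearMap.proj (R := ℝ) (φ := fun _ : Fin (n+1) => ℝ) i)
          (fun _ : Fin (n+1) => (1:ℝ)) - k = 0 := by
        rw [hLapp]
        simp only [mul_one]
        rw [hk]
        ring
      rwa [hval] at h3
    have hconst := is_const_of_deriv_eq_zero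
      (fun c => (hu c).differentiableAt) (fun c => (hu c).deriv) c 0
    simp only [zero_smul, add_zero, mul_zero, sub_zero] at hconst
    linarith [hconst]
  -- define g
  have hsnocC : ContDiff ℝ 2 (fun u : Fin n → ℝ => (Fin.snoc u (0:ℝ) : Fin (n+1) → ℝ)) := by
    apply contDiff_pi.2
    intro j
    refine Fin.lastCases ?_ ?_ j
    · have : (fun u : Fin n → ℝ => (Fin.snoc u (0:ℝ) : Fin (n+1) → ℝ) (Fin.last n))
          = fun _ => (0:ℝ) := by funext u; simp
      rw [this]; exact contDiff_const
    · intro i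
      have : (fun u : Fin n → ℝ => (Fin.snoc u (0:ℝ) : Fin (n+1) → ℝ) i.castSucc)
          = fun u => u i := by funext u; simp
      rw [this]
      exact (ContinuousLinearMap.proj (R := ℝ) (φ := fun _ : Fin n => ℝ) i).contDiff
  refine ⟨fun u => G (Fin.snoc u 0), k, hG2.comp hsnocC, ?_⟩
  intro x i
  have hbar : (fun y : Fin (n+1) → ℝ =>
      G (Fin.snoc (fun j : Fin n => y j.castSucc - y (Fin.last n)) 0) + k * y (Fin.last n))
      = G := by
    funext y
    have hsnoc : (Fin.snoc (fun j : Fin n => y j.castSucc - y (Fin.last n)) (0:ℝ)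
        : Fin (n+1) → ℝ) = y + (-(y (Fin.last n))) • (fun _ : Fin (n+1) => (1:ℝ)) := by
      funext j
      refine Fin.lastCases ?_ ?_ j
      · simp
      · intro m
        simp [sub_eq_add_neg]
    rw [hsnoc, hGshift]
    ring
  show f x i = fderiv ℝ (fun y : Fin (n+1) → ℝ =>
      G (Fin.snoc (fun j : Fin n => y j.castSucc - y (Fin.last n)) 0) + k * y (Fin.last n))
      x (Pi.single i 1)
  rw [hbar, (hGf x).fderiv, hLapp]
  simp [Pi.single_apply]
end aux

/-- `f` is a Laplacian map iff `f = ∇ḡ` where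
`ḡ(x) = g(x₁ - x_{n+1}, …, x_n - x_{n+1}) + k x_{n+1}` for some C² function `g` and
constant `k`. -/
theorem stmt_3 (n : ℕ) (f : (Fin (n + 1) → ℝ) → Fin (n + 1) → ℝ)
    (hf : ContDiff ℝ 1 f) :
    IsLaplacianMap f ↔
      ∃ (g : (Fin n → ℝ) → ℝ) (k : ℝ), ContDiff ℝ 2 g ∧
        ∀ (x : Fin (n + 1) → ℝ) (i : Fin (n + 1)),
          f x i =
            fderiv ℝ
              (fun y : Fin (n + 1) → ℝ =>
                g (fun j : Fin n => y j.castSucc - y (Fin.last n)) + k * y (Fin.last n))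
              x (Pi.single i 1) := by
  constructor
  · intro hL
    exact lap_forward f hf hL
  · rintro ⟨g, k, hg, hfg⟩
    exact lap_backward g k hg f hf hfg
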